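/- arXiv:1709.09985 — 2 statements merged into one kernel-verified Lean document; each statement's English description precedes it below -/
import Mathlib

section
/- Let G be a finite simple graph, R a graph possibly with loops, and (V_u)_{u∈V(R)} a partition of V(G). Suppose u₁ and u₂ are distinct twin nodes of R (every node distinct from both is adjacent to either both or neither of them) such that either u₁ and u₂ are adjacent and both have loops, or u₁ and u₂ are non-adjacent and neither has a loop. Let R' be the graph obtained from R by identifying u₁ and u₂ into a single node w (w is adjacent to exactly the common neighbors of u₁ and u₂ among the remaining nodes, and w has a loop if and only if u₁ and u₂ have loops), and let the partition for R' be obtained by replacing the parts V_{u₁} and V_{u₂} by the single part V_w = V_{u₁} ∪ V_{u₂}. Then G^{R'} = G^R. -/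
/-- The graph `G^R`: given a graph `R` possibly with loops on a node type `ι`
(presented as a relation) and a partition of `V(G)` indexed by the nodes of `R`
(presented as `p : V → ι`, the part `V_u` being `p ⁻¹' {u}`), two distinct
vertices are adjacent in `G^R` iff exactly one of the following holds:
they are adjacent in `G`, or their parts are adjacent in `R`. -/
def SimpleGraph.patternApply {V ι : Type*} (G : SimpleGraph V) (R : ι → ι → Prop)
    (p : V → ι) : SimpleGraph V where
  Adj v w := v ≠ w ∧ Xor' (G.Adj v w) (R (p v) (p w) ∨ R (p w) (p v))
  symm := by
    refine ⟨?_⟩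
    rintro v w ⟨h1, h2⟩
    refine ⟨h1.symm, ?_⟩
    rwa [G.adj_comm, or_comm] at h2
  loopless := ⟨fun v h => h.1 rfl⟩

/-- A pattern: a graph possibly with loops (a symmetric relation on nodes) with
no pair of adjacent twins both having loops and no pair of non-adjacent twins
neither of which has a loop. -/
def IsPattern {ι : Type*} (R : ι → ι → Prop) : Prop :=
  Symmetric R ∧ ∀ u₁ u₂ : ι, u₁ ≠ u₂ →
    (∀ w : ι, w ≠ u₁ → w ≠ u₂ → (R u₁ w ↔ R u₂ w)) →
    ¬((R u₁ u₂ ∧ R u₁ u₁ ∧ R u₂ u₂) ∨ (¬R u₁ u₂ ∧ ¬R u₁ u₁ ∧ ¬R u₂ u₂))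

/-- `G` is `d`-degenerate: the vertices can be linearly ordered (via an injection
into `ℕ`) so that every vertex has at most `d` neighbors preceding it. -/
def SimpleGraph.Degenerate {V : Type*} (G : SimpleGraph V) (d : ℕ) : Prop :=
  ∃ f : V → ℕ, Function.Injective f ∧ ∀ v : V, {w : V | G.Adj v w ∧ f w < f v}.ncard ≤ d

/-- Two sets of vertices are `k`-similar if their symmetric difference has at
most `k` elements. -/
def KSimilar {V : Type*} (k : ℕ) (X Y : Set V) : Prop := (symmDiff X Y).ncard ≤ k

/-- The `k`-similarity graph of `H`: two distinct vertices are adjacent iff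
their neighborhoods are `k`-similar. -/
def simGraph {V : Type*} (H : SimpleGraph V) (k : ℕ) : SimpleGraph V where
  Adj v w := v ≠ w ∧ KSimilar k (H.neighborSet v) (H.neighborSet w)
  symm := by
    refine ⟨?_⟩
    rintro v w ⟨h1, h2⟩
    exact ⟨h1.symm, by rwa [KSimilar, symmDiff_comm]⟩
  loopless := ⟨fun v h => h.1 rfl⟩

/-- The `u`-perfect set: the union of the parts `V_{u'}` over all neighbors
`u'` of `u` in `R`. -/
def perfectSet {V ι : Type*} (R : ι → ι → Prop) (p : V → ι) (u : ι) : Set V :=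
  {v : V | R u (p v)}

/-- A vertex `v` is `(u,k)`-perfect if its neighborhood in `G^R` is `k`-similar
to the `u`-perfect set. -/
def PerfectVtx {V ι : Type*} (G : SimpleGraph V) (R : ι → ι → Prop) (p : V → ι)
    (u : ι) (k : ℕ) (v : V) : Prop :=
  KSimilar k ((G.patternApply R p).neighborSet v) (perfectSet R p u)

/-- Complementing a graph on a subset `S` of its vertices: adjacency between
distinct vertices of `S` is flipped, all other adjacencies are unchanged. -/
def complementOn {V : Type*} (G : SimpleGraph V) (S : Set V) : SimpleGraph V where
  Adj v w := v ≠ w ∧ Xor' (G.Adj v w) (v ∈ S ∧ w ∈ S)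
  symm := by
    refine ⟨?_⟩
    rintro v w ⟨h1, h2⟩
    refine ⟨h1.symm, ?_⟩
    rwa [G.adj_comm, and_comm] at h2
  loopless := ⟨fun v h => h.1 rfl⟩

/-- if `u₁ ≠ u₂` are twin nodes of `R` that are either adjacent with both
having loops, or non-adjacent with neither having a loop, then identifying `u₂` with `u₁`
(deleting `u₂`, restricting `R` to the remaining nodes — by the twin property the merged
node `u₁` is adjacent to exactly the common neighbors of `u₁` and `u₂` and has a loop iff
both do) and merging the parts `V_{u₁}` and `V_{u₂}` yields the same graph: `G^{R'} = G^R`. -/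
theorem stmt8 {V ι : Type*} [Fintype V] [DecidableEq ι] (G : SimpleGraph V)
    (R : ι → ι → Prop) (hR : Symmetric R) (p : V → ι) (u₁ u₂ : ι) (hne : u₁ ≠ u₂)
    (htwin : ∀ w : ι, w ≠ u₁ → w ≠ u₂ → (R u₁ w ↔ R u₂ w))
    (hcase : (R u₁ u₂ ∧ R u₁ u₁ ∧ R u₂ u₂) ∨ (¬R u₁ u₂ ∧ ¬R u₁ u₁ ∧ ¬R u₂ u₂)) :
    G.patternApply (fun a b : {x : ι // x ≠ u₂} => R a.1 b.1)
      (fun v => if h : p v = u₂ then ⟨u₁, hne⟩ else ⟨p v, h⟩) = G.patternApply R p := by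
  have h12 : R u₁ u₂ ↔ R u₂ u₂ := by
    rcases hcase with ⟨h, _, h2⟩ | ⟨h, _, h2⟩ <;> exact ⟨fun _ => by tauto, fun _ => by tauto⟩
  have h11 : R u₁ u₂ ↔ R u₁ u₁ := by
    rcases hcase with ⟨h, h1, _⟩ | ⟨h, h1, _⟩ <;> exact ⟨fun _ => by tauto, fun _ => by tauto⟩
  have key : ∀ a b : ι, R (if a = u₂ then u₁ else a) (if b = u₂ then u₁ else b) ↔ R a b := by
    have key1 : ∀ b : ι, R u₁ b ↔ R u₂ b := by
      intro b
      by_cases hb2 : b = u₂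
      · subst hb2; rw [← h12, h11]
      by_cases hb1 : b = u₁
      · subst hb1
        exact ⟨fun h => hR (h11.2 h), fun h => h11.1 (hR h)⟩
      · exact htwin b hb1 hb2
    intro a b
    by_cases ha : a = u₂ <;> by_cases hb : b = u₂
    · rw [if_pos ha, if_pos hb, ha, hb, ← h11, h12]
    · rw [if_pos ha, if_neg hb, ha]; exact key1 b
    · rw [if_neg ha, if_pos hb, hb]
      exact ⟨fun h => hR ((key1 a).1 (hR h)), fun h => hR ((key1 a).2 (hR h))⟩
    · rw [if_neg ha, if_neg hb]
  have hq : ∀ v : V, ((if h : p v = u₂ then (⟨u₁, hne⟩ : {x : ι // x ≠ u₂}) else ⟨p v, h⟩) :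
      {x : ι // x ≠ u₂}).1 = if p v = u₂ then u₁ else p v := by
    intro v; split_ifs <;> rfl
  ext v w
  simp only [SimpleGraph.patternApply, hq, key]
end

section
/- Every finite d-degenerate simple graph on n vertices contains at most 2^d · n nonempty vertex subsets that induce complete subgraphs. -/
/-- a finite `d`-degenerate graph on `n` vertices contains at most
`2^d · n` nonempty vertex subsets inducing complete subgraphs. -/
theorem stmt16 {V : Type*} [Fintype V] (G : SimpleGraph V) (d : ℕ) (h : G.Degenerate d) :
    {S : Set V | S.Nonempty ∧ G.IsClique S}.ncard ≤ 2 ^ d * Fintype.card V := by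
  
  classical
  obtain ⟨f, hfinj, hdeg⟩ := h
  cases isEmpty_or_nonempty V with
  | inl hV =>
    have : {S : Set V | S.Nonempty ∧ G.IsClique S} = ∅ := by
      ext S
      simp only [Set.mem_setOf_eq, Set.mem_empty_iff_false, iff_false, not_and]
      rintro ⟨x, -⟩
      exact (IsEmpty.false x).elim
    simp [this]
  | inr hV =>
    inhabit V
    set L : V → Finset V := fun v => Finset.univ.filter (fun w => G.Adj v w ∧ f w < f v) with hLdef
    have hL : ∀ v, (L v).card ≤ d := by
      intro v
      have h1 := hdeg v
      have h2 : {w | G.Adj v w ∧ f w < f v} = ↑(L v) := by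
        ext w; simp [hLdef]
      rwa [h2, Set.ncard_coe_finset] at h1
    set T : Finset (V × Finset V) := Finset.univ.biUnion (fun v => {v} ×ˢ (L v).powerset) with hTdef
    have hmax : ∀ S : Set V, S.Nonempty → ∃ v ∈ S, ∀ w ∈ S, f w ≤ f v := fun S hS =>
      Set.exists_max_image S f S.toFinite hS
    set m : Set V → V := fun S => if h : S.Nonempty then (hmax S h).choose else default with hmdef
    have hm_mem : ∀ S : Set V, S.Nonempty → m S ∈ S := by
      intro S hS
      simp only [hmdef, dif_pos hS]
      exact (hmax S hS).choose_spec.1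
    have hm_max : ∀ S : Set V, (hS : S.Nonempty) → ∀ w ∈ S, f w ≤ f (m S) := by
      intro S hS
      simp only [hmdef, dif_pos hS]
      exact (hmax S hS).choose_spec.2
    set Φ : Set V → V × Finset V := fun S => (m S, (S \ {m S}).toFinite.toFinset) with hΦdef
    have hmaps : ∀ S ∈ {S : Set V | S.Nonempty ∧ G.IsClique S}, Φ S ∈ (↑T : Set (V × Finset V)) := by
      rintro S ⟨hne, hclq⟩
      have key : (S \ {m S}).toFinite.toFinset ∈ (L (m S)).powerset := by
        rw [Finset.mem_powerset]
        intro w hw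
        rw [Set.Finite.mem_toFinset, Set.mem_diff, Set.mem_singleton_iff] at hw
        obtain ⟨hwS, hwne⟩ := hw
        simp only [hLdef, Finset.mem_filter, Finset.mem_univ, true_and]
        refine ⟨hclq (hm_mem S hne) hwS (Ne.symm hwne), ?_⟩
        exact lt_of_le_of_ne (hm_max S hne w hwS) (fun hEq => hwne (hfinj hEq))
      have : Φ S ∈ T := by
        rw [hTdef, Finset.mem_biUnion]
        exact ⟨m S, Finset.mem_univ _, Finset.mem_product.2 ⟨Finset.mem_singleton_self _, key⟩⟩
      exact this
    have hinj : Set.InjOn Φ {S : Set V | S.Nonempty ∧ G.IsClique S} := by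
      rintro S1 ⟨h1, -⟩ S2 ⟨h2, -⟩ hEq
      simp only [hΦdef, Prod.mk.injEq] at hEq
      obtain ⟨hm12, hfs⟩ := hEq
      have hsets : S1 \ {m S1} = S2 \ {m S2} := by
        have := congrArg (fun s : Finset V => (↑s : Set V)) hfs
        simpa [Set.Finite.coe_toFinset] using this
      have e1 : S1 = insert (m S1) (S1 \ {m S1}) := by
        rw [Set.insert_diff_singleton, Set.insert_eq_self.2 (hm_mem S1 h1)]
      have e2 : S2 = insert (m S2) (S2 \ {m S2}) := by
        rw [Set.insert_diff_singleton, Set.insert_eq_self.2 (hm_mem S2 h2)]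
      calc S1 = insert (m S1) (S1 \ {m S1}) := e1
        _ = insert (m S2) (S2 \ {m S2}) := by rw [hsets, hm12]
        _ = S2 := e2.symm
    have step1 := Set.ncard_le_ncard_of_injOn Φ hmaps hinj (T : Set (V × Finset V)).toFinite
    rw [Set.ncard_coe_finset] at step1
    refine step1.trans ?_
    calc T.card ≤ ∑ v : V, ({v} ×ˢ (L v).powerset).card := Finset.card_biUnion_le
      _ ≤ ∑ _v : V, 2 ^ d := by
        refine Finset.sum_le_sum fun v _ => ?_
        rw [Finset.card_product, Finset.card_singleton, Finset.card_powerset, one_mul]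
        exact Nat.pow_le_pow_right (by norm_num) (hL v)
      _ = Fintype.card V * 2 ^ d := by simp [Finset.sum_const, Finset.card_univ, mul_comm]
      _ = 2 ^ d * Fintype.card V := mul_comm _ _
end
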